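/- Assume G(x,y) does not depend on y, and for every x ∈ X the functions y ↦ f(x,y) and y ↦ g_i(x,y), i = 1,…,q, are convex and continuously differentiable. If (x̄,ȳ) is a local optimal solution of the bilevel problem (P) and the LMFCQ holds at (x̄,y) for every y ∈ S(x̄), then for every z ∈ Λ(x̄,ȳ) the point (x̄,ȳ,z) is a local optimal solution of (KKTR). -/

import Mathlib

/-- `Vec k` is the Euclidean space `ℝ^k`. -/
abbrev Vec (k : ℕ) := Fin k → ℝ


open Set in
lemma grad_ineq {E : Type*} [NormedAddCommGroup E] [NormedSpace ℝ E]
    {φ : E → ℝ} (hc : ConvexOn ℝ Set.univ φ) (hd : Differentiable ℝ φ) (a b : E) :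
    φ a + fderiv ℝ φ a (b - a) ≤ φ b := by
  set ψ : ℝ → ℝ := fun t => φ (a + t • (b - a)) with hψ
  have hψc : ConvexOn ℝ Set.univ ψ := by
    have := hc.comp_affineMap (AffineMap.lineMap a b)
    simpa [hψ, Function.comp_def, AffineMap.lineMap_apply, vsub_eq_sub, vadd_eq_add, add_comm] using this
  have hder : HasDerivAt ψ (fderiv ℝ φ (a + (0:ℝ) • (b - a)) (b - a)) 0 := by
    have h1 : HasDerivAt (fun t : ℝ => a + t • (b - a)) (b - a) (0:ℝ) := by
      simpa using ((hasDerivAt_id (0:ℝ)).smul_const (b - a)).const_add a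
    exact (hd _).hasFDerivAt.comp_hasDerivAt 0 h1
  have := hψc.le_slope_of_hasDerivWithinAt_Ioi (mem_univ (0:ℝ)) (mem_univ (1:ℝ))
    zero_lt_one hder.hasDerivWithinAt
  have hs : slope ψ 0 1 = φ b - φ a := by
    simp [slope_def_field, hψ]
  rw [hs] at this
  simp only [zero_smul, add_zero] at this
  linarith

/-- Under lower-level convexity, smoothness and LMFCQ, a local
optimal solution `(x̄, ȳ)` of the bilevel problem (P) together with any lower-level
Lagrange multiplier `z ∈ Λ(x̄, ȳ)` yields a local optimal solution `(x̄, ȳ, z)` of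
the KKT reformulation (KKTR). -/
theorem stmt_1
    {n m p q : ℕ} (hn : 0 < n) (hm : 0 < m) (hp : 0 < p) (hq : 0 < q)
    (F : Vec n → Vec m → ℝ) (G : Vec n → Vec m → Vec p)
    (f : Vec n → Vec m → ℝ) (g : Vec n → Vec m → Vec q)
    -- G does not depend on y
    (hGy : ∀ x y y', G x y = G x y')
    -- for every x ∈ X, the lower-level data is convex and C¹ in y
    (hconv : ∀ x : Vec n, (∃ y, ∀ j, G x y j ≤ 0) →
      ConvexOn ℝ Set.univ (f x) ∧ ContDiff ℝ 1 (f x) ∧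
      ∀ i, ConvexOn ℝ Set.univ (fun y => g x y i) ∧ ContDiff ℝ 1 (fun y => g x y i))
    -- standing assumption: S(x) ≠ ∅ for every x ∈ X
    (hS : ∀ x : Vec n, (∃ y, ∀ j, G x y j ≤ 0) →
      ∃ y, (∀ i, g x y i ≤ 0) ∧ ∀ y', (∀ i, g x y' i ≤ 0) → f x y ≤ f x y')
    (xb : Vec n) (yb : Vec m)
    -- (xb, yb) is feasible for (P) : G ≤ 0 and yb ∈ S(xb)
    (hPfeas : (∀ j, G xb yb j ≤ 0) ∧ (∀ i, g xb yb i ≤ 0) ∧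
      ∀ y', (∀ i, g xb y' i ≤ 0) → f xb yb ≤ f xb y')
    -- (xb, yb) is locally optimal for (P)
    (hPopt : ∃ ε > (0 : ℝ), ∀ (x : Vec n) (y : Vec m),
      dist (x, y) (xb, yb) < ε →
      (∀ j, G x y j ≤ 0) → (∀ i, g x y i ≤ 0) →
      (∀ y', (∀ i, g x y' i ≤ 0) → f x y ≤ f x y') → F xb yb ≤ F x y)
    -- LMFCQ holds at (xb, y) for every y ∈ S(xb)
    (hLMFCQ : ∀ y : Vec m, (∀ i, g xb y i ≤ 0) →
      (∀ y', (∀ i, g xb y' i ≤ 0) → f xb y ≤ f xb y') →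
      ∃ d : Vec m, ∀ i, g xb y i = 0 → fderiv ℝ (fun y' => g xb y' i) y d < 0)
    -- z ∈ Λ(xb, yb)
    (z : Vec q)
    (hz1 : fderiv ℝ (f xb) yb + ∑ i, z i • fderiv ℝ (fun y' => g xb y' i) yb = 0)
    (hz2 : ∀ i, 0 ≤ z i) (hz3 : ∀ i, g xb yb i ≤ 0)
    (hz4 : ∑ i, z i * g xb yb i = 0) :
    -- (xb, yb, z) is a local optimal solution of (KKTR)
    ((∀ j, G xb yb j ≤ 0) ∧
      (fderiv ℝ (f xb) yb + ∑ i, z i • fderiv ℝ (fun y' => g xb y' i) yb = 0) ∧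
      (∀ i, g xb yb i ≤ 0) ∧ (∀ i, 0 ≤ z i) ∧ ∑ i, z i * g xb yb i = 0) ∧
    ∃ ε > (0 : ℝ), ∀ (x : Vec n) (y : Vec m) (z' : Vec q),
      dist (x, y, z') (xb, yb, z) < ε →
      (∀ j, G x y j ≤ 0) →
      (fderiv ℝ (f x) y + ∑ i, z' i • fderiv ℝ (fun y' => g x y' i) y = 0) →
      (∀ i, g x y i ≤ 0) → (∀ i, 0 ≤ z' i) → (∑ i, z' i * g x y i = 0) →
      F xb yb ≤ F x y := by
  
  refine ⟨⟨hPfeas.1, hz1, hz3, hz2, hz4⟩, ?_⟩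
  obtain ⟨ε, hε, hopt⟩ := hPopt
  refine ⟨ε, hε, ?_⟩
  intro x y z' hdist hG hfoc hgle hznn hcomp
  -- x ∈ X
  have hX : ∃ y0, ∀ j, G x y0 j ≤ 0 := ⟨y, hG⟩
  obtain ⟨hfc, hfd, hgcd⟩ := hconv x hX
  have hfdiff : Differentiable ℝ (f x) := hfd.differentiable one_ne_zero
  -- y is a global minimizer of f x over the lower-level feasible set
  have hmin : ∀ y', (∀ i, g x y' i ≤ 0) → f x y ≤ f x y' := by
    intro y' hy'
    have hfineq : f x y + fderiv ℝ (f x) y (y' - y) ≤ f x y' :=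
      grad_ineq hfc hfdiff y y'
    have hgineq : ∀ i, g x y i + fderiv ℝ (fun yy => g x yy i) y (y' - y) ≤ g x y' i := by
      intro i
      exact grad_ineq (hgcd i).1 ((hgcd i).2.differentiable one_ne_zero) y y'
    have hfoc' : fderiv ℝ (f x) y (y' - y)
        = -∑ i, z' i * fderiv ℝ (fun yy => g x yy i) y (y' - y) := by
      have := congrArg (fun L : Vec m →L[ℝ] ℝ => L (y' - y)) hfoc
      simpa [ContinuousLinearMap.add_apply, ContinuousLinearMap.sum_apply,
        ContinuousLinearMap.smul_apply, smul_eq_mul, eq_neg_iff_add_eq_zero] using this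
    have hsum : ∑ i, z' i * fderiv ℝ (fun yy => g x yy i) y (y' - y) ≤ 0 := by
      have h1 : ∑ i, z' i * fderiv ℝ (fun yy => g x yy i) y (y' - y)
          ≤ ∑ i, (z' i * g x y' i - z' i * g x y i) := by
        apply Finset.sum_le_sum
        intro i _
        have := hgineq i
        nlinarith [hznn i]
      have h2 : ∑ i, (z' i * g x y' i - z' i * g x y i)
          = (∑ i, z' i * g x y' i) - ∑ i, z' i * g x y i := by
        rw [Finset.sum_sub_distrib]
      have h3 : ∑ i, z' i * g x y' i ≤ 0 :=
        Finset.sum_nonpos fun i _ => mul_nonpos_of_nonneg_of_nonpos (hznn i) (hy' i)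
      rw [h2, hcomp] at h1
      linarith
    rw [hfoc'] at hfineq
    linarith
  -- distance bound
  have hdist2 : dist (x, y) (xb, yb) < ε := by
    refine lt_of_le_of_lt ?_ hdist
    simp only [Prod.dist_eq]
    exact max_le_max le_rfl (le_max_left _ _)
  exact hopt x y hdist2 hG hgle hmin
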